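/- Let W be a finite-dimensional complex vector space and let V be a finite-dimensional linear subspace of Sym(W) spanned by homogeneous elements of positive degree. Then there exists r₀ such that for all r ≥ r₀ the following holds: a power series f ∈ Sym(V)[[t]] is rational if and only if its coefficientwise image under i_r in (Sym(W)^{⊗r})[[t]] is rational. -/

import Mathlib

/-- A power series over a commutative ring `A` is rational if there is a polynomial `q` with
constant term `1` such that `q·f` is a polynomial. -/
def IsRationalSeries {A : Type*} [CommRing A] (f : PowerSeries A) : Prop :=
  ∃ q p : Polynomial A, q.coeff 0 = 1 ∧ (q : PowerSeries A) * f = (p : PowerSeries A)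

/-- Concrete model of the map `i_r : Sym(V) → Sym(W)^{⊗r}`.  Here `Sym(W)` for `W = ℂ^N` is
modelled by the polynomial ring `ℂ[y_1, …, y_N]`, the subspace `V ⊆ Sym(W)` is given together
with a basis `b : Fin κ → V`, `Sym(V)` is modelled by the polynomial ring `ℂ[z_1, …, z_κ]`
(via the basis `b`), and `Sym(W)^{⊗r}` is modelled by the polynomial ring in `r` disjoint
copies of the variables, the `s`-th factor inclusion being the renaming `y_j ↦ y_{(s,j)}`.
The map `i_r` sends the basis vector `z_v` of `V` to `∑_{s=1}^r 1 ⊗ ⋯ ⊗ b v ⊗ ⋯ ⊗ 1`. -/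
noncomputable def iMap (N κ r : ℕ) (V : Submodule ℂ (MvPolynomial (Fin N) ℂ))
    (b : Module.Basis (Fin κ) ℂ V) :
    MvPolynomial (Fin κ) ℂ →ₐ[ℂ] MvPolynomial (Fin r × Fin N) ℂ :=
  MvPolynomial.aeval fun v : Fin κ =>
    ∑ s : Fin r, MvPolynomial.rename (Prod.mk s) ((b v : MvPolynomial (Fin N) ℂ))


open MvPolynomial



lemma coe_map_powerSeries {R S : Type*} [CommRing R] [CommRing S] (ρ : R →+* S)
    (p : Polynomial R) :
    ((p.map ρ : Polynomial S) : PowerSeries S) = PowerSeries.map ρ (p : PowerSeries R) := by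
  ext n
  simp [Polynomial.coeff_coe, PowerSeries.coeff_map, Polynomial.coeff_map]

lemma IsRationalSeries.map {R S : Type*} [CommRing R] [CommRing S] (ρ : R →+* S)
    {f : PowerSeries R} (hf : IsRationalSeries f) :
    IsRationalSeries (PowerSeries.map ρ f) := by
  obtain ⟨q, p, hq, hqf⟩ := hf
  refine ⟨q.map ρ, p.map ρ, by simp [Polynomial.coeff_map, hq], ?_⟩
  rw [coe_map_powerSeries, coe_map_powerSeries, ← map_mul, hqf]

lemma powerSeries_map_comp {R S T : Type*} [CommRing R] [CommRing S] [CommRing T]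
    (ρ : R →+* S) (τ : S →+* T) (f : PowerSeries R) :
    PowerSeries.map τ (PowerSeries.map ρ f) = PowerSeries.map (τ.comp ρ) f := by
  ext n; simp


open Matrix in
lemma vandermonde_coeffs (d : ℕ) (hd : 1 ≤ d) :
    ∃ α : Fin (d+1) → ℂ, ∀ k, k ≤ d →
      (d.choose k : ℂ) * ∑ i, α i * (i : ℂ) ^ (d - k) = if k = 1 then 1 else 0 := by
  set c : Fin (d+1) → ℂ := fun i => (i : ℂ) with hc
  have hcinj : Function.Injective c := by
    intro i j hij
    have : ((i : ℕ) : ℂ) = ((j : ℕ) : ℂ) := hij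
    exact Fin.ext (Nat.cast_injective this)
  have hdet : (Matrix.vandermonde c).det ≠ 0 :=
    Matrix.det_vandermonde_ne_zero_iff.2 hcinj
  have hdetT : IsUnit ((Matrix.vandermonde c)ᵀ).det := by
    rw [Matrix.det_transpose]; exact hdet.isUnit
  set t : Fin (d+1) → ℂ := fun j => if (j : ℕ) = d - 1 then (d : ℂ)⁻¹ else 0 with ht
  set α : Fin (d+1) → ℂ := ((Matrix.vandermonde c)ᵀ)⁻¹.mulVec t with hα
  have hsys : ((Matrix.vandermonde c)ᵀ).mulVec α = t := by
    rw [hα, Matrix.mulVec_mulVec, Matrix.mul_nonsing_inv _ hdetT, Matrix.one_mulVec]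
  refine ⟨α, fun k hk => ?_⟩
  have hdk : d - k ≤ d := Nat.sub_le _ _
  have := congrFun hsys ⟨d - k, Nat.lt_succ_of_le hdk⟩
  simp only [Matrix.mulVec, Matrix.transpose_apply, Matrix.vandermonde, dotProduct] at this
  rw [ht] at this
  simp only [Matrix.of_apply] at this
  have hsum : ∑ i, α i * (i:ℂ) ^ (d - k) = if d - k = d - 1 then (d:ℂ)⁻¹ else 0 := by
    rw [← this]
    congr 1
    ext i
    ring
  rw [hsum]
  have hiff : d - k = d - 1 ↔ k = 1 := by omega
  by_cases h1 : k = 1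
  · rw [if_pos (hiff.2 h1), if_pos h1, h1, Nat.choose_one_right]
    rw [mul_inv_cancel₀ (by exact_mod_cast (by omega : d ≠ 0))]
  · rw [if_neg (fun h => h1 (hiff.1 h)), if_neg h1, mul_zero]

lemma sum_pow_eq {A : Type*} [CommRing A] [Algebra ℂ A] (d : ℕ) (hd : 1 ≤ d) (q : A) :
    ∃ l : List A, (l.map (· ^ d)).sum = q := by
  obtain ⟨α, hα⟩ := vandermonde_coeffs d hd
  choose μ hμ using fun i : Fin (d+1) => IsAlgClosed.exists_pow_nat_eq (α i) (by omega : 0 < d)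
  refine ⟨List.ofFn (fun i : Fin (d+1) =>
    algebraMap ℂ A (μ i) * (q + algebraMap ℂ A (i : ℂ))), ?_⟩
  rw [List.map_ofFn, List.sum_ofFn]
  have step : ∀ i : Fin (d+1),
      ((algebraMap ℂ A (μ i) * (q + algebraMap ℂ A (i : ℂ)))) ^ d
        = ∑ k ∈ Finset.range (d+1),
            algebraMap ℂ A (α i * (i : ℂ) ^ (d - k) * (d.choose k : ℂ)) * q ^ k := by
    intro i
    rw [mul_pow, ← map_pow, hμ, add_pow]
    rw [Finset.mul_sum]
    refine Finset.sum_congr rfl fun k hk => ?_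
    rw [← map_pow, map_mul, map_mul, map_natCast]
    push_cast
    ring
  simp_rw [Function.comp, step]
  rw [Finset.sum_comm]
  have key : ∀ k ∈ Finset.range (d+1),
      ∑ i : Fin (d+1), algebraMap ℂ A (α i * (i:ℂ) ^ (d-k) * (d.choose k : ℂ)) * q ^ k
        = (if k = 1 then 1 else 0 : A) * q ^ k := by
    intro k hk
    rw [← Finset.sum_mul, ← map_sum]
    congr 1
    have h2 : ∑ x : Fin (d+1), α x * (x:ℂ) ^ (d-k) * (d.choose k : ℂ)
        = if k = 1 then (1:ℂ) else 0 := by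
      rw [← hα k (Nat.lt_succ_iff.1 (Finset.mem_range.1 hk)), Finset.mul_sum]
      exact Finset.sum_congr rfl fun i _ => by ring
    rw [h2, apply_ite (algebraMap ℂ A), map_one, map_zero]
  rw [Finset.sum_congr rfl key]
  have h1 : (1:ℕ) ∈ Finset.range (d+1) := Finset.mem_range.2 (by omega)
  rw [Finset.sum_eq_single_of_mem 1 h1 (fun x _ hx => by rw [if_neg hx, zero_mul])]
  simp


-- scaled list power sums
lemma scaled_list_pow_sum {A : Type*} [CommRing A] [Algebra ℂ A] (c : ℂ) (l : List A) (e : ℕ) :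
    ((l.map (fun v => algebraMap ℂ A c * v)).map (· ^ e)).sum
      = algebraMap ℂ A (c ^ e) * (l.map (· ^ e)).sum := by
  rw [List.map_map, map_pow]
  have : ((· ^ e) ∘ fun v => algebraMap ℂ A c * v)
      = fun v => (algebraMap ℂ A c) ^ e * v ^ e := by
    funext v; simp [mul_pow]
  rw [this, ← List.sum_map_mul_left]

lemma power_sums_top {A : Type*} [CommRing A] [Algebra ℂ A] (m : ℕ) (hm : 1 ≤ m) (q : A) :
    ∃ l : List A, (l.map (· ^ m)).sum = q ∧
      ∀ e, 1 ≤ e → e < m → (l.map (· ^ e)).sum = 0 := by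
  obtain ⟨l₀, hl₀⟩ := sum_pow_eq m hm (algebraMap ℂ A ((m : ℂ)⁻¹) * q)
  obtain ⟨ζ, hζ⟩ : ∃ ζ : ℂ, IsPrimitiveRoot ζ m := ⟨_, Complex.isPrimitiveRoot_exp m (by omega)⟩
  set L : List (List A) := List.ofFn (fun a : Fin m =>
    l₀.map (fun v => algebraMap ℂ A (ζ ^ (a : ℕ)) * v)) with hL
  have key : ∀ e : ℕ, (L.flatten.map (· ^ e)).sum
      = algebraMap ℂ A (∑ a : Fin m, (ζ ^ e) ^ (a : ℕ)) * (l₀.map (· ^ e)).sum := by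
    intro e
    rw [List.map_flatten, List.sum_flatten, hL, List.map_ofFn, List.map_ofFn, List.sum_ofFn]
    have : ∀ a : Fin m, (List.map (· ^ e) (List.map
          (fun v => algebraMap ℂ A (ζ ^ (a:ℕ)) * v) l₀)).sum
        = algebraMap ℂ A ((ζ ^ e) ^ (a:ℕ)) * (l₀.map (· ^ e)).sum := by
      intro a
      rw [scaled_list_pow_sum]
      congr 2
      rw [← pow_mul, ← pow_mul, Nat.mul_comm]
    simp_rw [Function.comp]
    rw [Finset.sum_congr rfl (fun a _ => this a), ← Finset.sum_mul, ← map_sum]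
  refine ⟨L.flatten, ?_, ?_⟩
  · rw [key m]
    have : ∀ a : Fin m, (ζ ^ m) ^ (a : ℕ) = 1 := by
      intro a; rw [hζ.pow_eq_one, one_pow]
    rw [Finset.sum_congr rfl (fun a _ => this a)]
    simp only [Finset.sum_const, Finset.card_univ, Fintype.card_fin, nsmul_eq_mul, mul_one]
    rw [hl₀, map_natCast, ← mul_assoc]
    rw [← map_natCast (algebraMap ℂ A) m, ← map_mul,
      mul_inv_cancel₀ (by exact_mod_cast (by omega : m ≠ 0) : (m:ℂ) ≠ 0), map_one, one_mul]
  · intro e he hem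
    rw [key e]
    have hne : ζ ^ e ≠ 1 := hζ.pow_ne_one_of_pos_of_lt (by omega) hem
    have : ∑ a : Fin m, (ζ ^ e) ^ (a : ℕ) = 0 := by
      rw [Fin.sum_univ_eq_sum_range (fun a => (ζ ^ e) ^ a), geom_sum_eq hne]
      rw [← pow_mul, Nat.mul_comm, pow_mul, hζ.pow_eq_one, one_pow, sub_self, zero_div]
    rw [this, map_zero, zero_mul]

lemma prescribed_power_sums {A : Type*} [CommRing A] [Algebra ℂ A] (D : Finset ℕ)
    (d : ℕ) (q : A) (hD : ∀ e ∈ D, 1 ≤ e) (hd : d ∈ D) :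
    ∃ l : List A, ∀ e ∈ D, (l.map (· ^ e)).sum = if e = d then q else 0 := by
  induction D using Finset.strongInductionOn generalizing d q with
  | _ D IH =>
    have hDne : D.Nonempty := ⟨d, hd⟩
    set m := D.max' hDne with hmdef
    have hmD : m ∈ D := D.max'_mem hDne
    have hm1 : 1 ≤ m := hD m hmD
    by_cases hdm : d = m
    · obtain ⟨l, hl1, hl2⟩ := power_sums_top m hm1 q
      refine ⟨l, fun e he => ?_⟩
      by_cases hed : e = d
      · rw [if_pos hed, hed, hdm, hl1]
      · rw [if_neg hed]
        exact hl2 e (hD e he)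
          (lt_of_le_of_ne (D.le_max' e he) (fun h => hed (h.trans hdm.symm)))
    · have hsub : D.erase m ⊂ D := Finset.erase_ssubset hmD
      obtain ⟨l₁, hl₁⟩ := IH (D.erase m) hsub d q
        (fun e he => hD e (Finset.mem_of_mem_erase he))
        (Finset.mem_erase.2 ⟨hdm, hd⟩)
      obtain ⟨l₂, hl₂1, hl₂2⟩ := power_sums_top m hm1 (-(l₁.map (· ^ m)).sum)
      refine ⟨l₁ ++ l₂, fun e he => ?_⟩
      rw [List.map_append, List.sum_append]
      by_cases hem : e = m
      · subst hem
        rw [hl₂1, add_neg_cancel, if_neg (fun h => hdm h.symm)]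
      · rw [hl₁ e (Finset.mem_erase.2 ⟨hem, he⟩),
          hl₂2 e (hD e he) (lt_of_le_of_ne (D.le_max' e he) hem), add_zero]



lemma aeval_scaled {N : ℕ} {A : Type*} [CommRing A] [Algebra ℂ A] {e : ℕ}
    {f : MvPolynomial (Fin N) ℂ} (hf : f ∈ homogeneousSubmodule (Fin N) ℂ e)
    (u : A) (w : Fin N → ℂ) :
    aeval (fun n => u * algebraMap ℂ A (w n)) f
      = u ^ e * algebraMap ℂ A (eval w f) := by
  rw [mem_homogeneousSubmodule] at hf
  conv_lhs => rw [as_sum f]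
  conv_rhs => rw [as_sum f]
  rw [map_sum, map_sum, map_sum (algebraMap ℂ A), Finset.mul_sum]
  refine Finset.sum_congr rfl fun d hd => ?_
  have hdeg : (Finsupp.weight 1) d = e := hf (mem_support_iff.1 hd)
  rw [aeval_monomial, eval_monomial, map_mul]
  rw [Finsupp.prod, Finsupp.prod]
  have expand : ∏ n ∈ d.support, (u * algebraMap ℂ A (w n)) ^ d n
      = (∏ n ∈ d.support, u ^ d n) * ∏ n ∈ d.support, algebraMap ℂ A (w n ^ d n) := by
    rw [← Finset.prod_mul_distrib]
    exact Finset.prod_congr rfl fun n _ => by rw [mul_pow, map_pow]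
  rw [expand, Finset.prod_pow_eq_pow_sum]
  have hsum : ∑ n ∈ d.support, d n = e := by
    rw [← hdeg, show (Finsupp.weight 1 : (Fin N →₀ ℕ) →+ ℕ) = Finsupp.weight (fun _ => 1) from rfl, ← Finsupp.degree_eq_weight_one]; rfl
  rw [hsum, ← map_prod]
  ring



lemma list_sum_finset_sum {α β M : Type*} [AddCommMonoid M] (l : List α) (s : Finset β)
    (F : β → α → M) :
    (l.map (fun a => ∑ e ∈ s, F e a)).sum = ∑ e ∈ s, (l.map (F e)).sum := by
  induction l with
  | nil => simp
  | cons a t ih => simp [List.map_cons, List.sum_cons, ih, Finset.sum_add_distrib]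

lemma flatten_map_sum {α M : Type*} [AddCommMonoid M] {k : ℕ} (l : Fin k → List α) (φ : α → M) :
    (((List.ofFn l).flatten).map φ).sum = ∑ i, ((l i).map φ).sum := by
  rw [List.map_flatten, List.map_ofFn, List.sum_flatten, List.map_ofFn, List.sum_ofFn]
  rfl

lemma realize_ev {N κ Δ : ℕ} (V : Submodule ℂ (MvPolynomial (Fin N) ℂ))
    (hdeg : ∀ f ∈ V, MvPolynomial.totalDegree f ≤ Δ)
    (h0 : ∀ f ∈ V, homogeneousComponent 0 f = 0)
    {d : ℕ} (hd : d ∈ Finset.Icc 1 Δ) (w : Fin N → ℂ) (q : MvPolynomial (Fin κ) ℂ) :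
    ∃ l : List (Fin N → MvPolynomial (Fin κ) ℂ), ∀ f ∈ V,
      (l.map (fun g => aeval g f)).sum
        = algebraMap ℂ (MvPolynomial (Fin κ) ℂ) (eval w (homogeneousComponent d f)) * q := by
  obtain ⟨hd1, hdΔ⟩ := Finset.mem_Icc.1 hd
  obtain ⟨lu, hlu⟩ := prescribed_power_sums (Finset.Icc 1 Δ) d q
    (fun e he => (Finset.mem_Icc.1 he).1) hd
  refine ⟨lu.map (fun u => fun n => u * algebraMap ℂ _ (w n)), fun f hf => ?_⟩
  have hdecomp : ∑ e ∈ Finset.range (Δ+1), homogeneousComponent e f = f := by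
    rw [← Finset.sum_subset (Finset.range_subset_range.2 (Nat.succ_le_succ (hdeg f hf)))
      (fun e he hne => homogeneousComponent_eq_zero _ f
        (by rw [Finset.mem_range] at he hne; omega))]
    exact sum_homogeneousComponent f
  have hfun : ∀ u : MvPolynomial (Fin κ) ℂ,
      aeval (fun n => u * algebraMap ℂ _ (w n)) f
        = ∑ e ∈ Finset.range (Δ+1),
            u ^ e * algebraMap ℂ _ (eval w (homogeneousComponent e f)) := by
    intro u
    conv_lhs => rw [← hdecomp]
    rw [map_sum]
    exact Finset.sum_congr rfl fun e _ =>
      aeval_scaled (homogeneousComponent_mem e f) u w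
  rw [List.map_map]
  have : ((fun g : Fin N → MvPolynomial (Fin κ) ℂ => aeval g f)
        ∘ fun u => fun n => u * algebraMap ℂ (MvPolynomial (Fin κ) ℂ) (w n))
      = fun u => ∑ e ∈ Finset.range (Δ+1),
          u ^ e * algebraMap ℂ (MvPolynomial (Fin κ) ℂ)
            (eval w (homogeneousComponent e f)) := by
    funext u; exact hfun u
  rw [this]
  rw [list_sum_finset_sum lu (Finset.range (Δ+1))
    (fun e u => u ^ e * algebraMap ℂ _ (eval w (homogeneousComponent e f)))]
  have key : ∀ e ∈ Finset.range (Δ+1),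
      (lu.map (fun u => u ^ e * algebraMap ℂ _ (eval w (homogeneousComponent e f)))).sum
        = if e = d then
            algebraMap ℂ (MvPolynomial (Fin κ) ℂ) (eval w (homogeneousComponent d f)) * q
          else 0 := by
    intro e he
    rw [show (fun u : MvPolynomial (Fin κ) ℂ =>
        u ^ e * algebraMap ℂ _ (eval w (homogeneousComponent e f)))
      = (fun u => (fun x => x ^ e) u * algebraMap ℂ _ (eval w (homogeneousComponent e f)))
      from rfl, List.sum_map_mul_right]
    by_cases he0 : e = 0
    · rw [if_neg (by omega), he0, h0 f hf]
      simp
    · have heI : e ∈ Finset.Icc 1 Δ :=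
        Finset.mem_Icc.2 ⟨by omega, by rw [Finset.mem_range] at he; omega⟩
      rw [hlu e heI]
      by_cases hed : e = d
      · rw [if_pos hed, if_pos hed, hed]; ring
      · rw [if_neg hed, if_neg hed, zero_mul]
  rw [Finset.sum_congr rfl key,
    Finset.sum_eq_single_of_mem d (Finset.mem_range.2 (by omega))
      (fun x _ hx => if_neg hx), if_pos rfl]

noncomputable def evd {N : ℕ} (V : Submodule ℂ (MvPolynomial (Fin N) ℂ))
    (w : Fin N → ℂ) (d : ℕ) : ↥V →ₗ[ℂ] ℂ where
  toFun f := eval w (homogeneousComponent d (f : MvPolynomial (Fin N) ℂ))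
  map_add' f g := by simp
  map_smul' c f := by
    simp only [Submodule.coe_smul, smul_eq_C_mul, homogeneousComponent_C_mul,
      map_mul, eval_C, RingHom.id_apply, smul_eq_mul]

lemma realize_span {N κ Δ : ℕ} (V : Submodule ℂ (MvPolynomial (Fin N) ℂ))
    (hdeg : ∀ f ∈ V, MvPolynomial.totalDegree f ≤ Δ)
    (h0 : ∀ f ∈ V, homogeneousComponent 0 f = 0)
    (ℓ : ↥V →ₗ[ℂ] ℂ)
    (hl : ℓ ∈ Submodule.span ℂ
      {ℓ' : ↥V →ₗ[ℂ] ℂ | ∃ w d, d ∈ Finset.Icc 1 Δ ∧ ℓ' = evd V w d})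
    (q : MvPolynomial (Fin κ) ℂ) :
    ∃ l : List (Fin N → MvPolynomial (Fin κ) ℂ), ∀ (f) (hf : f ∈ V),
      (l.map (fun g => aeval g f)).sum
        = algebraMap ℂ (MvPolynomial (Fin κ) ℂ) (ℓ ⟨f, hf⟩) * q := by
  rw [Submodule.mem_span_set'] at hl
  obtain ⟨n, c, g, hg⟩ := hl
  have hdata := fun i : Fin n => (g i).2
  choose wi di hdi hei using hdata
  have hreal := fun i : Fin n => realize_ev V hdeg h0 (hdi i) (wi i)
    (algebraMap ℂ (MvPolynomial (Fin κ) ℂ) (c i) * q)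
  choose li hli using hreal
  refine ⟨(List.ofFn li).flatten, fun f hf => ?_⟩
  rw [flatten_map_sum]
  have step : ∀ i : Fin n, ((li i).map (fun g' => aeval g' f)).sum
      = algebraMap ℂ (MvPolynomial (Fin κ) ℂ) (c i * ((g i : ↥V →ₗ[ℂ] ℂ) ⟨f, hf⟩)) * q := by
    intro i
    rw [hli i f hf, hei i, map_mul]
    have : evd V (wi i) (di i) ⟨f, hf⟩
        = eval (wi i) (homogeneousComponent (di i) f) := rfl
    rw [this]
    ring
  rw [Finset.sum_congr rfl (fun i _ => step i), ← Finset.sum_mul, ← map_sum]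
  congr 2
  have := congrArg (fun (L : ↥V →ₗ[ℂ] ℂ) => L ⟨f, hf⟩) hg
  simp only [LinearMap.coe_sum, Finset.sum_apply, LinearMap.smul_apply,
    smul_eq_mul] at this
  exact this



section Main

variable (N κ : ℕ) (V : Submodule ℂ (MvPolynomial (Fin N) ℂ))

lemma comp0_eq_zero
    (hV : ∃ S : Set (MvPolynomial (Fin N) ℂ), V = Submodule.span ℂ S ∧
      ∀ f ∈ S, ∃ d : ℕ, 1 ≤ d ∧ f ∈ homogeneousSubmodule (Fin N) ℂ d) :
    ∀ f ∈ V, homogeneousComponent 0 f = 0 := by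
  obtain ⟨S, hSpan, hShom⟩ := hV
  intro f hf
  rw [hSpan] at hf
  induction hf using Submodule.span_induction with
  | mem x hx =>
    obtain ⟨d, hd1, hdh⟩ := hShom x hx
    rw [homogeneousComponent_of_mem hdh, if_neg (by omega)]
  | zero => simp
  | add x y _ _ hx hy => rw [map_add, hx, hy, add_zero]
  | smul c x _ hx => rw [map_smul, hx, smul_zero]

lemma constCoeff_eq_zero
    (hV : ∃ S : Set (MvPolynomial (Fin N) ℂ), V = Submodule.span ℂ S ∧
      ∀ f ∈ S, ∃ d : ℕ, 1 ≤ d ∧ f ∈ homogeneousSubmodule (Fin N) ℂ d)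
    {f : MvPolynomial (Fin N) ℂ} (hf : f ∈ V) : constantCoeff f = 0 := by
  have h := comp0_eq_zero N V hV f hf
  rw [homogeneousComponent_zero] at h
  have := congrArg constantCoeff h
  rwa [constantCoeff_C, map_zero] at this

lemma exists_points (b : Module.Basis (Fin κ) ℂ V)
    (hV : ∃ S : Set (MvPolynomial (Fin N) ℂ), V = Submodule.span ℂ S ∧
      ∀ f ∈ S, ∃ d : ℕ, 1 ≤ d ∧ f ∈ homogeneousSubmodule (Fin N) ℂ d) :
    ∃ L : List (Fin N → MvPolynomial (Fin κ) ℂ), ∀ v : Fin κ,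
      (L.map (fun g => aeval g ((b v : MvPolynomial (Fin N) ℂ)))).sum = X v := by
  have h0 := comp0_eq_zero N V hV
  set Δ : ℕ := Finset.univ.sup fun v : Fin κ =>
    (b v : MvPolynomial (Fin N) ℂ).totalDegree with hΔ
  have hdeg : ∀ f ∈ V, MvPolynomial.totalDegree f ≤ Δ := by
    intro f hf
    have hrepr := b.sum_repr ⟨f, hf⟩
    have hco : f = ∑ v, (b.repr ⟨f, hf⟩) v • (b v : MvPolynomial (Fin N) ℂ) := by
      have := congrArg (Submodule.subtype V) hrepr
      simp only [map_sum, map_smul, Submodule.subtype_apply] at this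
      exact this.symm
    rw [hco]
    refine le_trans (totalDegree_finset_sum _ _) ?_
    exact Finset.sup_mono_fun fun v _ => totalDegree_smul_le _ _
  haveI : FiniteDimensional ℂ ↥V := Module.Finite.of_basis b
  have hspan : Submodule.span ℂ
      {ℓ' : ↥V →ₗ[ℂ] ℂ | ∃ w d, d ∈ Finset.Icc 1 Δ ∧ ℓ' = evd V w d} = ⊤ := by
    apply Submodule.span_eq_top_of_ne_zero
    intro z hz
    by_contra hcon
    push_neg at hcon
    have hzero : (z : MvPolynomial (Fin N) ℂ) = 0 := by
      rw [← sum_homogeneousComponent (z : MvPolynomial (Fin N) ℂ)]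
      apply Finset.sum_eq_zero
      intro e _
      by_cases he0 : e = 0
      · rw [he0]; exact h0 _ z.2
      · by_cases heΔ : e ≤ Δ
        · have hall : ∀ x, eval x (homogeneousComponent e (z : MvPolynomial (Fin N) ℂ))
              = eval x (0 : MvPolynomial (Fin N) ℂ) := by
            intro x
            have hmem : evd V x e ∈
                {ℓ' : ↥V →ₗ[ℂ] ℂ | ∃ w d, d ∈ Finset.Icc 1 Δ ∧ ℓ' = evd V w d} :=
              ⟨x, e, Finset.mem_Icc.2 ⟨by omega, heΔ⟩, rfl⟩
            have := hcon (evd V x e) hmem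
            rw [map_zero]
            exact this
          exact MvPolynomial.funext hall
        · exact homogeneousComponent_eq_zero _ _
            (lt_of_le_of_lt (hdeg _ z.2) (by omega))
    exact hz (Subtype.ext hzero)
  have hv : ∀ v : Fin κ, ∃ l : List (Fin N → MvPolynomial (Fin κ) ℂ),
      ∀ (f) (hf : f ∈ V), (l.map (fun g => aeval g f)).sum
        = algebraMap ℂ (MvPolynomial (Fin κ) ℂ) ((b.coord v) ⟨f, hf⟩) * X v :=
    fun v => realize_span V hdeg h0 (b.coord v) (by rw [hspan]; trivial) (X v)
  choose lv hlv using hv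
  refine ⟨(List.ofFn lv).flatten, fun v => ?_⟩
  rw [flatten_map_sum]
  have key : ∀ v' : Fin κ, ((lv v').map (fun g =>
        aeval g ((b v : MvPolynomial (Fin N) ℂ)))).sum
      = if v = v' then X v' else 0 := by
    intro v'
    rw [hlv v' _ (b v).2]
    have heta : (⟨((b v : MvPolynomial (Fin N) ℂ)), (b v).2⟩ : ↥V) = b v := rfl
    rw [heta, Module.Basis.coord_apply, Module.Basis.repr_self, Finsupp.single_apply]
    by_cases hvv : v = v'
    · rw [if_pos hvv, if_pos hvv, map_one, one_mul]
    · rw [if_neg hvv, if_neg hvv, map_zero, zero_mul]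
  rw [Finset.sum_congr rfl (fun v' _ => key v'), Finset.sum_ite_eq]
  rw [if_pos (Finset.mem_univ v)]

end Main

lemma sum_range_getD {M α : Type*} [AddCommMonoid M] (φ : α → M) (dflt : α) (l : List α) :
    ∑ i ∈ Finset.range l.length, φ (l.getD i dflt) = (l.map φ).sum := by
  induction l with
  | nil => simp
  | cons a t ih =>
    rw [List.length_cons, Finset.sum_range_succ']
    simp only [List.getD_cons_succ, List.getD_cons_zero, List.map_cons, List.sum_cons, ih]
    exact add_comm _ _

lemma sum_getD {M α : Type*} [AddCommMonoid M] (l : List α) (dflt : α) (φ : α → M)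
    (hφ : φ dflt = 0) (r : ℕ) (hr : l.length ≤ r) :
    ∑ s : Fin r, φ (l.getD (s : ℕ) dflt) = (l.map φ).sum := by
  rw [Fin.sum_univ_eq_sum_range (fun s => φ (l.getD s dflt))]
  rw [← Finset.sum_range_add_sum_Ico _ hr]
  rw [Finset.sum_eq_zero (fun i hi => by
    rw [List.getD_eq_default _ _ (Finset.mem_Ico.1 hi).1, hφ] :
      ∀ i ∈ Finset.Ico l.length r, φ (l.getD i dflt) = 0)]
  rw [add_zero, sum_range_getD]


/-- main theorem -/
theorem iMap_rational_iff_for_large_r (N κ : ℕ) (V : Submodule ℂ (MvPolynomial (Fin N) ℂ))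
    (b : Module.Basis (Fin κ) ℂ V)
    (hV : ∃ S : Set (MvPolynomial (Fin N) ℂ), V = Submodule.span ℂ S ∧
      ∀ f ∈ S, ∃ d : ℕ, 1 ≤ d ∧ f ∈ MvPolynomial.homogeneousSubmodule (Fin N) ℂ d) :
    ∃ r₀ : ℕ, ∀ r : ℕ, r₀ ≤ r → ∀ f : PowerSeries (MvPolynomial (Fin κ) ℂ),
      IsRationalSeries f ↔
        IsRationalSeries (PowerSeries.map (iMap N κ r V b).toRingHom f) := by
  obtain ⟨L, hL⟩ := exists_points N κ V b hV
  refine ⟨L.length, fun r hr f => ?_⟩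
  set π : MvPolynomial (Fin r × Fin N) ℂ →ₐ[ℂ] MvPolynomial (Fin κ) ℂ :=
    aeval (fun p : Fin r × Fin N => L.getD (p.1 : ℕ) 0 p.2) with hπ
  have hcomp : π.comp (iMap N κ r V b) = AlgHom.id ℂ (MvPolynomial (Fin κ) ℂ) := by
    apply MvPolynomial.algHom_ext
    intro v
    rw [AlgHom.comp_apply, AlgHom.id_apply]
    have h1 : iMap N κ r V b (X v)
        = ∑ s : Fin r, rename (Prod.mk s) ((b v : MvPolynomial (Fin N) ℂ)) := by
      rw [iMap, aeval_X]
    rw [h1, map_sum]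
    have h2 : ∀ s : Fin r, π (rename (Prod.mk s) ((b v : MvPolynomial (Fin N) ℂ)))
        = aeval (L.getD (s : ℕ) 0) ((b v : MvPolynomial (Fin N) ℂ)) := by
      intro s
      rw [hπ, aeval_rename]
      rfl
    rw [Finset.sum_congr rfl (fun s _ => h2 s)]
    rw [sum_getD L 0 (fun g => aeval g ((b v : MvPolynomial (Fin N) ℂ)))
      (by
        show (aeval (fun _ => (0 : MvPolynomial (Fin κ) ℂ)))
          ((b v : MvPolynomial (Fin N) ℂ)) = 0
        rw [aeval_zero', constCoeff_eq_zero N V hV (b v).2, map_zero]) r hr]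
    exact hL v
  have hring : (π.toRingHom).comp (iMap N κ r V b).toRingHom
      = RingHom.id (MvPolynomial (Fin κ) ℂ) := by
    have := congrArg AlgHom.toRingHom hcomp
    exact this
  constructor
  · exact fun h => h.map _
  · intro h
    have h2 := h.map π.toRingHom
    rwa [powerSeries_map_comp, hring, PowerSeries.map_id] at h2
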